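/- Let R be a commutative Noetherian ring of prime characteristic p, let I be an ideal of R, and let U be a multiplicative set in R. Then the extension of the tight closure of I to the localization is contained in the tight closure of the extended ideal: I*·R[U⁻¹] ⊆ (I·R[U⁻¹])*. -/

import Mathlib

/-- The `q`-th Frobenius power `I^{[q]}` of an ideal `I`: the ideal generated by
`q`-th powers of elements of `I`. -/
def Ideal.frobeniusPower {R : Type*} [CommRing R] (I : Ideal R) (q : ℕ) : Ideal R :=
  Ideal.span ((fun x => x ^ q) '' (I : Set R))

/-- `R°`: the set of elements of `R` not contained in any minimal prime of `R`. -/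
def primeComplement (R : Type*) [CommRing R] : Set R :=
  { c | ∀ P ∈ minimalPrimes R, c ∉ P }

/-- The tight closure `I*` of an ideal `I` in a ring of characteristic `p`:
elements `z` such that `c * z ^ (p ^ e) ∈ I ^ [p ^ e]` for some `c ∈ R°`
and all sufficiently large `e`. -/
def tightClosure (p : ℕ) {R : Type*} [CommRing R] (I : Ideal R) : Set R :=
  { z | ∃ c ∈ primeComplement R, ∃ N : ℕ, ∀ e : ℕ, N ≤ e →
      c * z ^ p ^ e ∈ I.frobeniusPower (p ^ e) }

/-- Tight closure commutes with localization in `R`: for every ideal `I` and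
multiplicative set `U`, `I* · R[U⁻¹] = (I · R[U⁻¹])*`. -/
def TightClosureCommutesWithLocalization (p : ℕ) (R : Type*) [CommRing R] : Prop :=
  ∀ (I : Ideal R) (U : Submonoid R),
    (Ideal.map (algebraMap R (Localization U)) (Ideal.span (tightClosure p I)) :
        Set (Localization U))
      = tightClosure p (Ideal.map (algebraMap R (Localization U)) I)

/-- A ring is F-regular if every ideal is tightly closed, both in the ring itself
and in all of its localizations. -/
def FRegular (p : ℕ) (S : Type*) [CommRing S] : Prop :=
  (∀ I : Ideal S, tightClosure p I = (I : Set S)) ∧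
    ∀ (U : Submonoid S) (J : Ideal (Localization U)),
      tightClosure p J = (J : Set (Localization U))

/-- `x^q ∈ I^{[q]}` for `x ∈ I`. -/
lemma frob_pow_mem {R : Type*} [CommRing R] {I : Ideal R} {x : R} (hx : x ∈ I) (q : ℕ) :
    x ^ q ∈ I.frobeniusPower q :=
  Ideal.subset_span ⟨x, hx, rfl⟩

/-- Frobenius powers behave well under ideal maps. -/
lemma frob_map_le {R S : Type*} [CommRing R] [CommRing S] (f : R →+* S) (I : Ideal R) (q : ℕ) :
    Ideal.map f (I.frobeniusPower q) ≤ (Ideal.map f I).frobeniusPower q := by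
  rw [Ideal.frobeniusPower, Ideal.map_span, Ideal.span_le]
  rintro _ ⟨_, ⟨x, hx, rfl⟩, rfl⟩
  rw [map_pow]
  exact frob_pow_mem (Ideal.mem_map_of_mem f hx) q

lemma one_mem_primeComplement (S : Type*) [CommRing S] : (1 : S) ∈ primeComplement S :=
  fun P hP h1 => hP.1.1.ne_top ((Ideal.eq_top_iff_one P).2 h1)

lemma mul_mem_primeComplement {S : Type*} [CommRing S] {c d : S}
    (hc : c ∈ primeComplement S) (hd : d ∈ primeComplement S) : c * d ∈ primeComplement S :=
  fun P hP hm => (hP.1.1.mem_or_mem hm).elim (hc P hP) (hd P hP)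

/-- The image of `R°` in the localization lands in `(R[U⁻¹])°`. -/
lemma primeComplement_map {R : Type*} [CommRing R] (U : Submonoid R) {c : R}
    (hc : c ∈ primeComplement R) :
    algebraMap R (Localization U) c ∈ primeComplement (Localization U) := by
  intro Q hQ hmem
  set f := algebraMap R (Localization U) with hf
  haveI hQp : Q.IsPrime := hQ.1.1
  have hcomap : (Q.comap f).IsPrime := Ideal.IsPrime.comap f
  obtain ⟨P, hPmin, hPQ⟩ := Ideal.exists_minimalPrimes_le (I := (⊥ : Ideal R)) (J := Q.comap f)
    bot_le
  haveI hPp : P.IsPrime := hPmin.1.1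
  have hdisjQ : Disjoint (U : Set R) ((Q.comap f : Ideal R) : Set R) := by
    rw [Set.disjoint_left]
    intro u hu huQ
    exact hQp.ne_top (Q.eq_top_of_isUnit_mem (Ideal.mem_comap.1 huQ)
      (IsLocalization.map_units (Localization U) ⟨u, hu⟩))
  have hdisjP : Disjoint (U : Set R) (P : Set R) :=
    hdisjQ.mono_right (fun x hx => hPQ hx)
  have hmapP : (Ideal.map f P).IsPrime :=
    IsLocalization.isPrime_of_isPrime_disjoint U (Localization U) P hPp hdisjP
  have hmapPQ : Ideal.map f P ≤ Q := Ideal.map_le_iff_le_comap.2 hPQ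
  have hQle : Q ≤ Ideal.map f P := hQ.2 ⟨hmapP, bot_le⟩ hmapPQ
  have hcP : c ∈ P := by
    have : c ∈ (Ideal.map f P).comap f := Ideal.mem_comap.2 (hQle hmem)
    rwa [← Ideal.under_def, IsLocalization.comap_map_of_isPrime_disjoint U (Localization U) hPp hdisjP] at this
  exact hc P hPmin hcP

/-- Images of tight closure elements are in the tight closure of the image ideal. -/
lemma mem_tightClosure_map {R : Type*} [CommRing R] (p : ℕ) (I : Ideal R) (U : Submonoid R)
    {z : R} (hz : z ∈ tightClosure p I) :
    algebraMap R (Localization U) z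
      ∈ tightClosure p (Ideal.map (algebraMap R (Localization U)) I) := by
  obtain ⟨c, hc, N, hN⟩ := hz
  refine ⟨algebraMap R (Localization U) c, primeComplement_map U hc, N, fun e he => ?_⟩
  rw [← map_pow, ← map_mul]
  exact frob_map_le _ _ _ (Ideal.mem_map_of_mem _ (hN e he))

/-- The easy inclusion: `I* · R[U⁻¹] ⊆ (I · R[U⁻¹])*`. -/
theorem tightClosure_map_subset_tightClosure_of_map
    (p : ℕ) [Fact p.Prime] (R : Type) [CommRing R] [IsNoetherianRing R] [CharP R p]
    (I : Ideal R) (U : Submonoid R) :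
    (Ideal.map (algebraMap R (Localization U)) (Ideal.span (tightClosure p I)) :
        Set (Localization U))
      ⊆ tightClosure p (Ideal.map (algebraMap R (Localization U)) I) := by
  set S := Localization U
  set f := algebraMap R S
  set J := Ideal.map f I
  have hp : p.Prime := Fact.out
  intro x hx
  rcases subsingleton_or_nontrivial S with hS | hS
  · refine ⟨1, one_mem_primeComplement S, 0, fun e he => ?_⟩
    have : 1 * x ^ p ^ e = 0 := Subsingleton.elim _ _
    rw [this]; exact Ideal.zero_mem _
  · haveI : CharP S p := by
      have h0 : (p : S) = 0 := by
        rw [← map_natCast f p, CharP.cast_eq_zero R p, map_zero]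
      have hd : ringChar S ∣ p := ringChar.dvd h0
      rcases (hp.eq_one_or_self_of_dvd _ hd) with h1 | hps
      · exact absurd h1 (CharP.char_ne_one S (ringChar S))
      · exact ringChar.of_eq hps
    have hx' : x ∈ Ideal.span (f '' tightClosure p I) := by
      rwa [Ideal.map_span] at hx
    refine Submodule.span_induction (p := fun y _ => y ∈ tightClosure p J)
      ?_ ?_ ?_ ?_ hx'
    · rintro _ ⟨z, hz, rfl⟩
      exact mem_tightClosure_map p I U hz
    · refine ⟨1, one_mem_primeComplement S, 0, fun e he => ?_⟩
      rw [zero_pow (pow_ne_zero e hp.ne_zero), mul_zero]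
      exact Ideal.zero_mem _
    · rintro a b _ _ ⟨c, hc, N, hN⟩ ⟨d, hd, M, hM⟩
      refine ⟨c * d, mul_mem_primeComplement hc hd, max N M, fun e he => ?_⟩
      rw [add_pow_char_pow, mul_add]
      refine Ideal.add_mem _ ?_ ?_
      · have := hN e (le_trans (le_max_left N M) he)
        have heq : c * d * a ^ p ^ e = d * (c * a ^ p ^ e) := by ring
        rw [heq]
        exact Ideal.mul_mem_left _ _ this
      · have := hM e (le_trans (le_max_right N M) he)
        have heq : c * d * b ^ p ^ e = c * (d * b ^ p ^ e) := by ring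
        rw [heq]
        exact Ideal.mul_mem_left _ _ this
    · rintro a y _ ⟨c, hc, N, hN⟩
      refine ⟨c, hc, N, fun e he => ?_⟩
      have heq : c * (a • y) ^ p ^ e = a ^ p ^ e * (c * y ^ p ^ e) := by
        rw [smul_eq_mul]; ring
      rw [heq]
      exact Ideal.mul_mem_left _ _ (hN e he)
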